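/- Let (Ω, 𝔽, ℙ) be a probability space, let A ∈ ℝ^{n×n}, F ∈ ℝ^{n×m}, x_0 ∈ ℝⁿ (deterministic), and let w_0, w_1, w_2, … be square-integrable ℝ^m-valued random vectors that are pairwise independent, each with mean zero, and satisfying 𝔼[⟨v, w_t⟩²] ≥ ε_w·‖v‖² for some ε_w > 0, all t and all v ∈ ℝ^m. Define x_{k+1} = A x_k + F w_k, and suppose the pair (A, F) is reachable, with ε_R > 0 such that ∑_{j=0}^{n-1} A^j F Fᵀ (Aᵀ)^j ⪰ ε_R·I. Then for every integer N_u > n and every t ∈ ℕ and every v ∈ ℝⁿ, ∑_{k=t}^{t+N_u-1} 𝔼[⟨v, x_k⟩²] ≥ ε_w · (N_u − n) · ε_R · ‖v‖². -/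

import Mathlib

open Matrix MeasureTheory ProbabilityTheory

section Aux

lemma aux_sum_mulVec {n : ℕ} {ι : Type*} [DecidableEq ι] (s : Finset ι) (g : ι → Matrix (Fin n) (Fin n) ℝ)
    (v : Fin n → ℝ) : (∑ i ∈ s, g i) *ᵥ v = ∑ i ∈ s, (g i *ᵥ v) := by
  induction s using Finset.induction with
  | empty => simp [Matrix.zero_mulVec]
  | insert _ _ h ih => simp [Finset.sum_insert h, Matrix.add_mulVec, ih]

lemma aux_dot_sum {n : ℕ} {ι : Type*} [DecidableEq ι] (s : Finset ι) (v : Fin n → ℝ) (g : ι → Fin n → ℝ) :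
    v ⬝ᵥ (∑ i ∈ s, g i) = ∑ i ∈ s, v ⬝ᵥ g i := by
  induction s using Finset.induction with
  | empty => simp
  | insert _ _ h ih => simp [Finset.sum_insert h, dotProduct_add, ih]

/-- Expectation of the square of a constant plus a sum of pairwise independent,
mean-zero, square-integrable random variables. -/
lemma aux_integral_sq {Ω : Type*} [MeasurableSpace Ω] (μ : Measure Ω) [IsProbabilityMeasure μ]
    (k : ℕ) (c : ℝ) (f : ℕ → Ω → ℝ)
    (hf : ∀ j, MemLp (f j) 2 μ) (h0 : ∀ j, ∫ ω, f j ω ∂μ = 0)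
    (hind : ∀ i j, i ≠ j → IndepFun (f i) (f j) μ) :
    ∫ ω, (c + ∑ j ∈ Finset.range k, f j ω) ^ 2 ∂μ
      = c ^ 2 + ∑ j ∈ Finset.range k, ∫ ω, (f j ω) ^ 2 ∂μ := by
  have hint : ∀ j, Integrable (f j) μ := fun j => (hf j).integrable one_le_two
  have hmul : ∀ i j, Integrable (fun ω => f i ω * f j ω) μ := by
    intro i j
    rcases eq_or_ne i j with rfl | hij
    · simpa [pow_two] using (hf i).integrable_sq
    · exact (hind i j hij).integrable_mul (hint i) (hint j)
  have hSint : Integrable (fun ω => ∑ j ∈ Finset.range k, f j ω) μ :=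
    integrable_finset_sum _ fun j _ => hint j
  have hS2 : Integrable (fun ω => (∑ j ∈ Finset.range k, f j ω) ^ 2) μ := by
    have : (fun ω => (∑ j ∈ Finset.range k, f j ω) ^ 2)
        = fun ω => ∑ i ∈ Finset.range k, ∑ j ∈ Finset.range k, f i ω * f j ω := by
      funext ω; rw [pow_two, Finset.sum_mul_sum]
    rw [this]
    exact integrable_finset_sum _ fun i _ => integrable_finset_sum _ fun j _ => hmul i j
  have key : ∫ ω, (∑ j ∈ Finset.range k, f j ω) ^ 2 ∂μ
      = ∑ j ∈ Finset.range k, ∫ ω, (f j ω) ^ 2 ∂μ := by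
    have h1 : ∫ ω, (∑ j ∈ Finset.range k, f j ω) ^ 2 ∂μ
        = ∑ i ∈ Finset.range k, ∑ j ∈ Finset.range k, ∫ ω, f i ω * f j ω ∂μ := by
      simp_rw [pow_two, Finset.sum_mul_sum]
      rw [integral_finset_sum _ fun i _ => integrable_finset_sum _ fun j _ => hmul i j]
      exact Finset.sum_congr rfl fun i _ => integral_finset_sum _ fun j _ => hmul i j
    rw [h1]
    refine Finset.sum_congr rfl fun i hi => ?_
    rw [Finset.sum_eq_single i]
    · simp [pow_two]
    · intro j _ hji
      have h2 := (hind i j (Ne.symm hji)).integral_mul_eq_mul_integral (hint i).1 (hint j).1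
      calc ∫ ω, f i ω * f j ω ∂μ = ∫ ω, (f i * f j) ω ∂μ := rfl
        _ = (∫ ω, f i ω ∂μ) * ∫ ω, f j ω ∂μ := h2
        _ = 0 := by rw [h0 i, h0 j, mul_zero]
    · intro h; exact absurd hi h
  have expand : (fun ω => (c + ∑ j ∈ Finset.range k, f j ω) ^ 2)
      = fun ω => (c ^ 2 + (2 * c) * (∑ j ∈ Finset.range k, f j ω))
          + (∑ j ∈ Finset.range k, f j ω) ^ 2 := by
    funext ω; ring
  have i0 : Integrable (fun _ : Ω => c ^ 2) μ := integrable_const _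
  have ih : Integrable (fun ω => 2 * c * ∑ j ∈ Finset.range k, f j ω) μ := hSint.const_mul _
  have i1 : Integrable (fun ω => c ^ 2 + 2 * c * ∑ j ∈ Finset.range k, f j ω) μ := i0.add ih
  rw [expand, integral_add i1 hS2, integral_add i0 ih, MeasureTheory.integral_const_mul,
    integral_finset_sum _ fun j _ => hint j]
  simp [h0, key]

/-- Explicit solution of the linear stochastic recursion. -/
lemma aux_unroll {Ω : Type*} {n m : ℕ} (A : Matrix (Fin n) (Fin n) ℝ)
    (F : Matrix (Fin n) (Fin m) ℝ) (x0 : Fin n → ℝ) (w : ℕ → Ω → Fin m → ℝ)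
    (x : ℕ → Ω → Fin n → ℝ) (hx0 : ∀ ω, x 0 ω = x0)
    (hx : ∀ k ω, x (k + 1) ω = A.mulVec (x k ω) + F.mulVec (w k ω)) :
    ∀ k ω, x k ω = (A ^ k).mulVec x0
      + ∑ j ∈ Finset.range k, (A ^ (k - 1 - j) * F).mulVec (w j ω) := by
  intro k
  induction k with
  | zero => intro ω; simp [hx0]
  | succ k ih =>
    intro ω
    rw [hx k ω, ih ω, Matrix.mulVec_add, Finset.sum_range_succ]
    have h1 : A.mulVec ((A ^ k).mulVec x0) = (A ^ (k + 1)).mulVec x0 := by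
      rw [Matrix.mulVec_mulVec, ← pow_succ']
    have h2 : A.mulVec (∑ j ∈ Finset.range k, (A ^ (k - 1 - j) * F).mulVec (w j ω))
        = ∑ j ∈ Finset.range k, (A ^ (k + 1 - 1 - j) * F).mulVec (w j ω) := by
      calc A *ᵥ (∑ j ∈ Finset.range k, (A ^ (k - 1 - j) * F) *ᵥ w j ω)
          = A.mulVecLin (∑ j ∈ Finset.range k, (A ^ (k - 1 - j) * F) *ᵥ w j ω) := by
            rw [Matrix.mulVecLin_apply]
        _ = ∑ j ∈ Finset.range k, A.mulVecLin ((A ^ (k - 1 - j) * F) *ᵥ w j ω) :=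
            map_sum A.mulVecLin _ _
        _ = ∑ j ∈ Finset.range k, (A ^ (k + 1 - 1 - j) * F) *ᵥ w j ω := by
            refine Finset.sum_congr rfl fun j hj => ?_
            have hjk : j < k := Finset.mem_range.mp hj
            have he : k + 1 - 1 - j = (k - 1 - j) + 1 := by omega
            rw [Matrix.mulVecLin_apply, Matrix.mulVec_mulVec, ← Matrix.mul_assoc,
              ← pow_succ', he]
    rw [h1, h2]
    simp [add_assoc, add_comm, add_left_comm]

end Aux

/-- For the stochastic recursion `x_{k+1} = A x_k + F w_k` driven by pairwise independent,
mean-zero, square-integrable noise with `𝔼[⟨v,w_t⟩²] ≥ ε_w‖v‖²`, if `(A, F)` is reachable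
with Gramian `∑_{j<n} A^j F Fᵀ (Aᵀ)^j ⪰ ε_R·I`, then for every `N_u > n`, `t` and `v`,
`∑_{k=t}^{t+N_u-1} 𝔼[⟨v, x_k⟩²] ≥ ε_w (N_u − n) ε_R ‖v‖²`. -/
theorem window_second_moment_lower_bound {Ω : Type*} [MeasurableSpace Ω]
    (μ : Measure Ω) [IsProbabilityMeasure μ]
    (n m : ℕ) (A : Matrix (Fin n) (Fin n) ℝ) (F : Matrix (Fin n) (Fin m) ℝ)
    (x0 : Fin n → ℝ) (w : ℕ → Ω → Fin m → ℝ)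
    (hL2 : ∀ t i, MemLp (fun ω => w t ω i) 2 μ)
    (hindep : ∀ s t, s ≠ t → IndepFun (w s) (w t) μ)
    (hmean : ∀ t i, ∫ ω, w t ω i ∂μ = 0)
    (εw : ℝ) (hεw : 0 < εw)
    (hvar : ∀ t (v : Fin m → ℝ), ∫ ω, (v ⬝ᵥ w t ω) ^ 2 ∂μ ≥ εw * (v ⬝ᵥ v))
    (x : ℕ → Ω → Fin n → ℝ)
    (hx0 : ∀ ω, x 0 ω = x0)
    (hx : ∀ k ω, x (k + 1) ω = A.mulVec (x k ω) + F.mulVec (w k ω))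
    (hreach : (Matrix.of fun (i : Fin n) (jk : Fin n × Fin m) =>
        (A ^ (jk.1 : ℕ) * F) i jk.2).rank = n)
    (εR : ℝ) (hεR : 0 < εR)
    (hgram : ((∑ j ∈ Finset.range n, A ^ j * F * Fᵀ * (Aᵀ) ^ j)
        - εR • (1 : Matrix (Fin n) (Fin n) ℝ)).PosSemidef) :
    ∀ Nu : ℕ, n < Nu → ∀ t : ℕ, ∀ v : Fin n → ℝ,
      ∑ k ∈ Finset.Ico t (t + Nu), ∫ ω, (v ⬝ᵥ x k ω) ^ 2 ∂μ ≥
        εw * ((Nu : ℝ) - (n : ℝ)) * εR * (v ⬝ᵥ v) := by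
  intro Nu hNu t v
  -- measurability of dot products
  have hmeas : ∀ (u : Fin m → ℝ), Measurable fun y : Fin m → ℝ => u ⬝ᵥ y := by
    intro u
    simp only [dotProduct]
    exact Finset.measurable_sum _ fun i _ => (measurable_pi_apply i).const_mul _
  -- L² membership of dot products with the noise
  have hfL2 : ∀ (u : Fin m → ℝ) (j : ℕ), MemLp (fun ω => u ⬝ᵥ w j ω) 2 μ := by
    intro u j
    have := memLp_finset_sum (Finset.univ : Finset (Fin m))
      (f := fun i ω => u i * w j ω i) (fun i _ => (hL2 j i).const_mul (u i))
    simpa [dotProduct] using this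
  -- zero mean of dot products with the noise
  have hfmean : ∀ (u : Fin m → ℝ) (j : ℕ), ∫ ω, u ⬝ᵥ w j ω ∂μ = 0 := by
    intro u j
    have : ∫ ω, u ⬝ᵥ w j ω ∂μ = ∑ i, ∫ ω, u i * w j ω i ∂μ := by
      simp only [dotProduct]
      exact integral_finset_sum _ fun i _ =>
        (((hL2 j i).integrable one_le_two).const_mul (u i))
    rw [this]
    refine Finset.sum_eq_zero fun i _ => ?_
    rw [MeasureTheory.integral_const_mul, hmean j i, mul_zero]
  -- lower bound on the Gramian quadratic form
  have hq : ∀ e : ℕ, (0:ℝ) ≤ ((A ^ e * F)ᵀ *ᵥ v) ⬝ᵥ ((A ^ e * F)ᵀ *ᵥ v) := by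
    intro e
    simp only [dotProduct]
    exact Finset.sum_nonneg fun i _ => mul_self_nonneg _
  have hqe : ∀ e : ℕ, ((A ^ e * F)ᵀ *ᵥ v) ⬝ᵥ ((A ^ e * F)ᵀ *ᵥ v)
      = v ⬝ᵥ ((A ^ e * F * Fᵀ * (Aᵀ) ^ e) *ᵥ v) := by
    intro e
    set M := A ^ e * F with hM
    have h1 : ((M)ᵀ *ᵥ v) ⬝ᵥ ((M)ᵀ *ᵥ v) = ((M *ᵥ (Mᵀ *ᵥ v))) ⬝ᵥ v := by
      rw [Matrix.dotProduct_mulVec, Matrix.vecMul_transpose]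
    rw [h1, Matrix.mulVec_mulVec, dotProduct_comm]
    congr 1
    rw [hM, Matrix.transpose_mul, Matrix.transpose_pow, Matrix.mul_assoc,
      ← Matrix.mul_assoc (A ^ e) F _, ← Matrix.mul_assoc]
  have hgram' : v ⬝ᵥ ((∑ j ∈ Finset.range n, A ^ j * F * Fᵀ * (Aᵀ) ^ j) *ᵥ v)
      ≥ εR * (v ⬝ᵥ v) := by
    have h := hgram.dotProduct_mulVec_nonneg v
    simp only [star_trivial] at h
    rw [Matrix.sub_mulVec, dotProduct_sub, Matrix.smul_mulVec,
      Matrix.one_mulVec, dotProduct_smul, smul_eq_mul] at h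
    linarith
  -- per-step lower bound for k ≥ n
  have hkey : ∀ k : ℕ, n ≤ k → ∫ ω, (v ⬝ᵥ x k ω) ^ 2 ∂μ ≥ εw * (εR * (v ⬝ᵥ v)) := by
    intro k hnk
    set u : ℕ → Fin m → ℝ := fun j => (A ^ (k - 1 - j) * F)ᵀ *ᵥ v with hu
    set f : ℕ → Ω → ℝ := fun j ω => u j ⬝ᵥ w j ω with hf
    have hpt : ∀ ω, v ⬝ᵥ x k ω
        = (v ⬝ᵥ ((A ^ k) *ᵥ x0)) + ∑ j ∈ Finset.range k, f j ω := by
      intro ω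
      rw [aux_unroll A F x0 w x hx0 hx k ω, dotProduct_add,
        aux_dot_sum]
      congr 1
      refine Finset.sum_congr rfl fun j _ => ?_
      rw [hf, hu]
      simp only
      rw [Matrix.dotProduct_mulVec, ← Matrix.vecMul_transpose]
      · rfl
    have hI : ∫ ω, (v ⬝ᵥ x k ω) ^ 2 ∂μ
        = (v ⬝ᵥ ((A ^ k) *ᵥ x0)) ^ 2 + ∑ j ∈ Finset.range k, ∫ ω, (f j ω) ^ 2 ∂μ := by
      have : (fun ω => (v ⬝ᵥ x k ω) ^ 2)
          = fun ω => ((v ⬝ᵥ ((A ^ k) *ᵥ x0)) + ∑ j ∈ Finset.range k, f j ω) ^ 2 := by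
        funext ω; rw [hpt ω]
      rw [this]
      exact aux_integral_sq μ k _ f (fun j => hfL2 (u j) j) (fun j => hfmean (u j) j)
        (fun i j hij => (hindep i j hij).comp (hmeas (u i)) (hmeas (u j)))
    have hvarsum : ∑ j ∈ Finset.range k, ∫ ω, (f j ω) ^ 2 ∂μ
        ≥ εw * ∑ j ∈ Finset.range k, (u j ⬝ᵥ u j) := by
      rw [Finset.mul_sum]
      exact Finset.sum_le_sum fun j _ => hvar j (u j)
    have hreindex : ∑ j ∈ Finset.range k, (u j ⬝ᵥ u j)
        = ∑ e ∈ Finset.range k, ((A ^ e * F)ᵀ *ᵥ v) ⬝ᵥ ((A ^ e * F)ᵀ *ᵥ v) := by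
      rw [← Finset.sum_range_reflect
        (fun e => ((A ^ e * F)ᵀ *ᵥ v) ⬝ᵥ ((A ^ e * F)ᵀ *ᵥ v)) k]
    have hmono : ∑ e ∈ Finset.range k, ((A ^ e * F)ᵀ *ᵥ v) ⬝ᵥ ((A ^ e * F)ᵀ *ᵥ v)
        ≥ ∑ e ∈ Finset.range n, ((A ^ e * F)ᵀ *ᵥ v) ⬝ᵥ ((A ^ e * F)ᵀ *ᵥ v) :=
      Finset.sum_le_sum_of_subset_of_nonneg
        (Finset.range_subset_range.mpr hnk) (fun e _ _ => hq e)
    have hGram : ∑ e ∈ Finset.range n, ((A ^ e * F)ᵀ *ᵥ v) ⬝ᵥ ((A ^ e * F)ᵀ *ᵥ v)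
        ≥ εR * (v ⬝ᵥ v) := by
      calc ∑ e ∈ Finset.range n, ((A ^ e * F)ᵀ *ᵥ v) ⬝ᵥ ((A ^ e * F)ᵀ *ᵥ v)
          = ∑ e ∈ Finset.range n, v ⬝ᵥ ((A ^ e * F * Fᵀ * (Aᵀ) ^ e) *ᵥ v) :=
            Finset.sum_congr rfl fun e _ => hqe e
        _ = v ⬝ᵥ ((∑ e ∈ Finset.range n, A ^ e * F * Fᵀ * (Aᵀ) ^ e) *ᵥ v) := by
            rw [aux_sum_mulVec, aux_dot_sum]
        _ ≥ εR * (v ⬝ᵥ v) := hgram'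
    have hc2 : (0:ℝ) ≤ (v ⬝ᵥ ((A ^ k) *ᵥ x0)) ^ 2 := sq_nonneg _
    have := mul_le_mul_of_nonneg_left hGram (le_of_lt hεw)
    calc ∫ ω, (v ⬝ᵥ x k ω) ^ 2 ∂μ
        = (v ⬝ᵥ ((A ^ k) *ᵥ x0)) ^ 2 + ∑ j ∈ Finset.range k, ∫ ω, (f j ω) ^ 2 ∂μ := hI
      _ ≥ ∑ j ∈ Finset.range k, ∫ ω, (f j ω) ^ 2 ∂μ := by linarith
      _ ≥ εw * ∑ j ∈ Finset.range k, (u j ⬝ᵥ u j) := hvarsum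
      _ = εw * ∑ e ∈ Finset.range k, ((A ^ e * F)ᵀ *ᵥ v) ⬝ᵥ ((A ^ e * F)ᵀ *ᵥ v) := by
            rw [hreindex]
      _ ≥ εw * ∑ e ∈ Finset.range n, ((A ^ e * F)ᵀ *ᵥ v) ⬝ᵥ ((A ^ e * F)ᵀ *ᵥ v) :=
            mul_le_mul_of_nonneg_left hmono (le_of_lt hεw)
      _ ≥ εw * (εR * (v ⬝ᵥ v)) := mul_le_mul_of_nonneg_left hGram (le_of_lt hεw)
  -- each summand is nonnegative
  have hpos : ∀ k : ℕ, (0:ℝ) ≤ ∫ ω, (v ⬝ᵥ x k ω) ^ 2 ∂μ :=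
    fun k => integral_nonneg fun ω => sq_nonneg _
  -- counting argument
  set b : ℝ := εw * (εR * (v ⬝ᵥ v)) with hb
  have hvv : (0:ℝ) ≤ v ⬝ᵥ v := by
    simp only [dotProduct]
    exact Finset.sum_nonneg fun i _ => mul_self_nonneg _
  have hbnn : 0 ≤ b := by positivity
  have hsub : Finset.Ico (max t n) (t + Nu) ⊆ Finset.Ico t (t + Nu) := by
    apply Finset.Ico_subset_Ico (le_max_left t n) le_rfl
  have step1 : ∑ k ∈ Finset.Ico t (t + Nu), ∫ ω, (v ⬝ᵥ x k ω) ^ 2 ∂μ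
      ≥ ∑ k ∈ Finset.Ico (max t n) (t + Nu), ∫ ω, (v ⬝ᵥ x k ω) ^ 2 ∂μ :=
    Finset.sum_le_sum_of_subset_of_nonneg hsub (fun k _ _ => hpos k)
  have step2 : ∑ k ∈ Finset.Ico (max t n) (t + Nu), ∫ ω, (v ⬝ᵥ x k ω) ^ 2 ∂μ
      ≥ ∑ _k ∈ Finset.Ico (max t n) (t + Nu), b := by
    refine Finset.sum_le_sum fun k hk => ?_
    have : n ≤ k := le_trans (le_max_right t n) (Finset.mem_Ico.mp hk).1
    exact hkey k this
  have hcard : (Finset.Ico (max t n) (t + Nu)).card = t + Nu - max t n := Nat.card_Ico _ _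
  have hcard2 : Nu - n ≤ t + Nu - max t n := by omega
  have hcardR : ((Nu : ℝ) - (n : ℝ)) ≤ ((Finset.Ico (max t n) (t + Nu)).card : ℝ) := by
    rw [hcard]
    have h1 : ((Nu - n : ℕ) : ℝ) ≤ ((t + Nu - max t n : ℕ) : ℝ) := Nat.cast_le.mpr hcard2
    have h2 : ((Nu - n : ℕ) : ℝ) = (Nu : ℝ) - (n : ℝ) := by
      rw [Nat.cast_sub (le_of_lt hNu)]
    linarith
  have step3 : ∑ _k ∈ Finset.Ico (max t n) (t + Nu), b
      = ((Finset.Ico (max t n) (t + Nu)).card : ℝ) * b := by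
    rw [Finset.sum_const, nsmul_eq_mul]
  have final : εw * ((Nu : ℝ) - (n : ℝ)) * εR * (v ⬝ᵥ v)
      ≤ ((Finset.Ico (max t n) (t + Nu)).card : ℝ) * b := by
    have h3 : εw * ((Nu : ℝ) - (n : ℝ)) * εR * (v ⬝ᵥ v) = ((Nu : ℝ) - (n : ℝ)) * b := by
      rw [hb]; ring
    rw [h3]
    exact mul_le_mul_of_nonneg_right hcardR hbnn
  calc ∑ k ∈ Finset.Ico t (t + Nu), ∫ ω, (v ⬝ᵥ x k ω) ^ 2 ∂μ
      ≥ ∑ k ∈ Finset.Ico (max t n) (t + Nu), ∫ ω, (v ⬝ᵥ x k ω) ^ 2 ∂μ := step1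
    _ ≥ ∑ _k ∈ Finset.Ico (max t n) (t + Nu), b := step2
    _ = ((Finset.Ico (max t n) (t + Nu)).card : ℝ) * b := step3
    _ ≥ εw * ((Nu : ℝ) - (n : ℝ)) * εR * (v ⬝ᵥ v) := final
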